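/- A finitely generated additive submonoid of the nonnegative cone of an ordered field contains no strictly decreasing sequence. -/

import Mathlib

theorem fg_positive_monoid_no_strict_anti {K : Type*} [Field K] [LinearOrder K] [IsStrictOrderedRing K]
    (P : AddSubmonoid K) (hP : ∀ x ∈ P, 0 ≤ x) (hfg : P.FG) :
    ¬∃ s : ℕ → K, (∀ n, s n ∈ P) ∧ StrictAnti s := by
  rintro ⟨s, hs, hanti⟩
  obtain ⟨S, hS⟩ := hfg
  have hSn : ∀ g ∈ S, (0:K) ≤ g := fun g hg =>
    hP g (hS ▸ AddSubmonoid.subset_closure hg)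
  -- get coefficient representations
  have hrep : ∀ n, ∃ c : K → ℕ, ∑ g ∈ S, c g • g = s n := by
    intro n
    have : s n ∈ Submodule.span ℕ (↑S : Set K) := by
      have h1 : s n ∈ (Submodule.span ℕ (↑S : Set K)).toAddSubmonoid := by
        rw [Submodule.span_nat_eq_addSubmonoidClosure, hS]; exact hs n
      exact h1
    exact (Submodule.mem_span_finset.mp this).imp fun _ h => h.2
  choose c hc using hrep
  -- Dickson's lemma on coefficient vectors
  have hpwo : (Set.univ : Set ({g // g ∈ S} → ℕ)).IsPWO :=
    Set.isPWO_of_wellQuasiOrderedLE _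
  obtain ⟨m, n, hmn, hle⟩ :=
    hpwo (fun n => ⟨fun (g : {g // g ∈ S}) => c n g.val, Set.mem_univ _⟩)
  have : s m ≤ s n := by
    rw [← hc m, ← hc n]
    apply Finset.sum_le_sum
    intro g hg
    have hg0 : (0:K) ≤ g := hSn g hg
    have hcle : c m g ≤ c n g := hle ⟨g, hg⟩
    simp only [nsmul_eq_mul]
    exact mul_le_mul_of_nonneg_right (by exact_mod_cast hcle) hg0
  exact absurd this (not_le.mpr (hanti hmn))
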